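/- arXiv:2401.08605 — 3 statements merged into one kernel-verified Lean document; each statement's English description precedes it below -/
import Mathlib

section
/- Let p_1, …, p_k be distinct primes, N = p_1 + ⋯ + p_k, and P = p_1 ⋯ p_k. Then there exists a linear thresholding system (J, θ) on N genes (with all thresholds positive) having a cycle of length P; that is, there exists x ∈ {0,1}^N which is a periodic point of f_{(J,θ)} with minimal period exactly P. -/
/-- The map of a linear thresholding system `(J, θ)` on `{0,1}^N`:
`f(x)_i = 1` iff `(Jx)_i > θ_i`, where `x ∈ {0,1}^N` is viewed as a real vector. -/
noncomputable def ltsMap {N : ℕ} (J : Matrix (Fin N) (Fin N) ℝ) (θ : Fin N → ℝ)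
    (x : Fin N → Bool) : Fin N → Bool :=
  fun i => if θ i < J.mulVec (fun j => if x j then (1 : ℝ) else 0) i then true else false

/-- Given distinct primes `p_1, …, p_k` with `N = ∑ p_i` and `P = ∏ p_i`, there is a linear
thresholding system on `N` genes (with positive thresholds) having a cycle of length `P`. -/
theorem exists_cycle_of_length_prod {k : ℕ} (p : Fin k → ℕ) (hp : ∀ i, (p i).Prime)
    (hinj : Function.Injective p) :
    ∃ (J : Matrix (Fin (∑ i, p i)) (Fin (∑ i, p i)) ℝ) (θ : Fin (∑ i, p i) → ℝ),
      (∀ i, 0 < θ i) ∧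
      ∃ x : Fin (∑ i, p i) → Bool,
        Function.IsPeriodicPt (ltsMap J θ) (∏ i, p i) x ∧
        Function.minimalPeriod (ltsMap J θ) x = ∏ i, p i := by
  classical
  have hpos : ∀ i, 0 < p i := fun i => (hp i).pos
  obtain ⟨e⟩ : Nonempty ((Σ i : Fin k, Fin (p i)) ≃ Fin (∑ i, p i)) :=
    ⟨Fintype.equivFinOfCardEq (by simp)⟩
  let shift : (Σ i : Fin k, Fin (p i)) → (Σ i : Fin k, Fin (p i)) :=
    fun s => ⟨s.1, ⟨(s.2.val + 1) % p s.1, Nat.mod_lt _ (hpos _)⟩⟩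
  let σ : Fin (∑ i, p i) → Fin (∑ i, p i) := fun a => e (shift (e.symm a))
  let J : Matrix (Fin (∑ i, p i)) (Fin (∑ i, p i)) ℝ := fun a b => if b = σ a then 1 else 0
  let θ : Fin (∑ i, p i) → ℝ := fun _ => 1/2
  have hstep : ∀ x : Fin (∑ i, p i) → Bool, ltsMap J θ x = fun a => x (σ a) := by
    intro x
    funext a
    have hmv : J.mulVec (fun j => if x j then (1 : ℝ) else 0) a
        = if x (σ a) then (1 : ℝ) else 0 := by
      show (∑ b, (if b = σ a then (1:ℝ) else 0) * (if x b then 1 else 0))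
          = if x (σ a) then (1 : ℝ) else 0
      simp only [ite_mul, one_mul, zero_mul]
      rw [Finset.sum_ite_eq' Finset.univ (σ a) (fun b => if x b then (1:ℝ) else 0),
        if_pos (Finset.mem_univ _)]
    simp only [ltsMap, hmv, θ]
    cases h : x (σ a) <;> simp [h] <;> norm_num
  have hiter : ∀ n (x : Fin (∑ i, p i) → Bool),
      (ltsMap J θ)^[n] x = fun a => x (σ^[n] a) := by
    intro n
    induction n with
    | zero => intro x; rfl
    | succ n ih =>
      intro x
      rw [Function.iterate_succ_apply', ih, hstep]
      funext a
      simp [Function.iterate_succ_apply]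
  have key : ∀ (i : Fin k) (v w : ℕ) (hv : v < p i) (hw : w < p i), v = w →
      e ⟨i, ⟨v, hv⟩⟩ = e ⟨i, ⟨w, hw⟩⟩ := by
    rintro i v w hv hw rfl; rfl
  have hσ : ∀ (i : Fin k) (j : Fin (p i)),
      σ (e ⟨i, j⟩) = e ⟨i, ⟨(j.val + 1) % p i, Nat.mod_lt _ (hpos i)⟩⟩ := by
    intro i j
    show e (shift (e.symm (e ⟨i, j⟩))) = _
    rw [e.symm_apply_apply]
  have hsig : ∀ n (i : Fin k) (j : Fin (p i)),
      σ^[n] (e ⟨i, j⟩) = e ⟨i, ⟨(j.val + n) % p i, Nat.mod_lt _ (hpos i)⟩⟩ := by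
    intro n
    induction n with
    | zero =>
      intro i j
      exact key i j.val ((j.val + 0) % p i) j.isLt _ (by simp [Nat.mod_eq_of_lt j.isLt])
    | succ n ih =>
      intro i j
      rw [Function.iterate_succ_apply, hσ, ih]
      exact key i _ _ _ _ (by rw [Nat.mod_add_mod, Nat.add_assoc, Nat.add_comm 1 n])
  let x : Fin (∑ i, p i) → Bool := fun a => decide ((e.symm a).2.val = 0)
  have hxv : ∀ (i : Fin k) (j : Fin (p i)), x (e ⟨i, j⟩) = decide (j.val = 0) := by
    intro i j
    show decide ((e.symm (e ⟨i, j⟩)).2.val = 0) = _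
    rw [e.symm_apply_apply]
  have hxn : ∀ n (i : Fin k) (j : Fin (p i)),
      (ltsMap J θ)^[n] x (e ⟨i, j⟩) = decide ((j.val + n) % p i = 0) := by
    intro n i j
    rw [hiter]
    show x (σ^[n] (e ⟨i, j⟩)) = _
    rw [hsig, hxv]
  have hPpos : 0 < ∏ i, p i := Finset.prod_pos (fun i _ => hpos i)
  have hper : Function.IsPeriodicPt (ltsMap J θ) (∏ i, p i) x := by
    show (ltsMap J θ)^[∏ i, p i] x = x
    funext a
    obtain ⟨⟨i, j⟩, rfl⟩ := e.surjective a
    rw [hxn, hxv]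
    obtain ⟨c, hc⟩ : p i ∣ ∏ i, p i := Finset.dvd_prod_of_mem p (Finset.mem_univ i)
    have h1 : (j.val + ∏ i, p i) % p i = j.val := by
      rw [hc, Nat.add_mul_mod_self_left, Nat.mod_eq_of_lt j.isLt]
    rw [h1]
  refine ⟨J, θ, fun _ => by norm_num, x, hper, ?_⟩
  have hm1 : Function.minimalPeriod (ltsMap J θ) x ∣ ∏ i, p i := hper.minimalPeriod_dvd
  set m := Function.minimalPeriod (ltsMap J θ) x with hm
  have hfm : (ltsMap J θ)^[m] x = x := Function.isPeriodicPt_minimalPeriod _ _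
  have hdi : ∀ i, p i ∣ m := by
    intro i
    have h0 : (ltsMap J θ)^[m] x (e ⟨i, ⟨0, hpos i⟩⟩) = x (e ⟨i, ⟨0, hpos i⟩⟩) := by rw [hfm]
    rw [hxn, hxv] at h0
    simp at h0
    exact Nat.dvd_of_mod_eq_zero h0
  have hPdvd : ∏ i, p i ∣ m := by
    have himg : ∏ i, p i = ∏ q ∈ Finset.image p Finset.univ, q := by
      rw [Finset.prod_image (fun a _ b _ h => hinj h)]
    rw [himg]
    refine Finset.prod_primes_dvd m ?_ ?_
    · intro q hq
      simp only [Finset.mem_image] at hq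
      obtain ⟨i, _, rfl⟩ := hq
      exact (hp i).prime
    · intro q hq
      simp only [Finset.mem_image] at hq
      obtain ⟨i, _, rfl⟩ := hq
      exact hdi i
  exact Nat.dvd_antisymm hm1 hPdvd
end

section
/- Let p_1, …, p_k be distinct primes, N = p_1 + ⋯ + p_k, and let f : {0,1}^N → {0,1}^N be the product of the cyclic shifts on the blocks of sizes p_1, …, p_k (equivalently, the linear thresholding map whose matrix is block-diagonal with blocks cyclically permuting the basis vectors of ℝ^{p_i} and all thresholds 1/2). Then for every subset S ⊆ {1,…,k}, the number of orbits of f of cardinality exactly ∏_{i∈S} p_i is at least ∏_{i∈S} (2^{p_i} − 2)/p_i. -/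
/-- The product of the cyclic shifts on blocks `{0,1}^{p 1} × ⋯ × {0,1}^{p k}`:
each block is shifted cyclically (indices in `ℤ/(p i)ℤ`). -/
def prodShift {k : ℕ} (p : Fin k → ℕ) (x : (i : Fin k) → ZMod (p i) → Bool) :
    (i : Fin k) → ZMod (p i) → Bool :=
  fun i j => x i (j - 1)

/-- The orbit of a state under the product of cyclic shifts. -/
def prodOrbit {k : ℕ} (p : Fin k → ℕ) (x : (i : Fin k) → ZMod (p i) → Bool) :
    Set ((i : Fin k) → ZMod (p i) → Bool) :=
  {y | ∃ n : ℕ, (prodShift p)^[n] x = y}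

lemma prodShift_iterate {k : ℕ} (p : Fin k → ℕ) (n : ℕ)
    (x : (i : Fin k) → ZMod (p i) → Bool) :
    (prodShift p)^[n] x = fun i j => x i (j - (n : ZMod (p i))) := by
  induction n with
  | zero => simp
  | succ n ih =>
    rw [Function.iterate_succ_apply', ih]
    funext i j
    simp only [prodShift]
    congr 1
    push_cast
    ring

lemma prodShift_injective {k : ℕ} (p : Fin k → ℕ) :
    Function.Injective (prodShift p) := by
  intro x y h
  funext i j
  have := congrFun (congrFun h i) (j + 1)
  simpa [prodShift] using this

lemma block_period {q : ℕ} (hq : q.Prime) (y : ZMod q → Bool) (a b : ZMod q)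
    (hab : y a ≠ y b) (n : ℕ) (h : ∀ j, y (j - (n : ZMod q)) = y j) : q ∣ n := by
  haveI : Fact q.Prime := ⟨hq⟩
  by_contra hd
  have hn : (n : ZMod q) ≠ 0 := by
    simpa [ZMod.natCast_eq_zero_iff] using hd
  have key : ∀ m : ℕ, ∀ j, y (j - (m : ZMod q) * (n : ZMod q)) = y j := by
    intro m
    induction m with
    | zero => simp
    | succ m ih =>
      intro j
      have h1 : j - ((m : ZMod q) + 1) * (n : ZMod q)
          = (j - (n : ZMod q)) - (m : ZMod q) * (n : ZMod q) := by ring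
      push_cast
      rw [h1, ih, h]
  have : y a = y b := by
    have := key ((a - b) * (n : ZMod q)⁻¹).val a
    rw [ZMod.natCast_val, ZMod.cast_id] at this
    rw [mul_assoc, inv_mul_cancel₀ hn, mul_one] at this
    simpa using this.symm
  exact hab this

lemma fermat_little (q : ℕ) (hq : q.Prime) : q ∣ 2 ^ q - 2 := by
  haveI : Fact q.Prime := ⟨hq⟩
  have h2 : 2 ≤ 2 ^ q := Nat.le_self_pow hq.pos.ne' 2
  have : ((2 ^ q - 2 : ℕ) : ZMod q) = 0 := by
    rw [Nat.cast_sub h2]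
    push_cast
    rw [ZMod.pow_card]
    ring
  exact (ZMod.natCast_eq_zero_iff _ _).mp this

lemma prod_primes_dvd' {k : ℕ} (p : Fin k → ℕ) (hp : ∀ i, (p i).Prime)
    (hinj : Function.Injective p) (S : Finset (Fin k)) (n : ℕ)
    (h : ∀ i ∈ S, p i ∣ n) : (∏ i ∈ S, p i) ∣ n := by
  have him : ∏ q ∈ S.image p, q = ∏ i ∈ S, p i :=
    Finset.prod_image (fun x _ y _ hxy => hinj hxy)
  rw [← him]
  refine Finset.prod_primes_dvd n ?_ ?_
  · intro q hq
    obtain ⟨i, _, rfl⟩ := Finset.mem_image.mp hq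
    exact (hp i).prime
  · intro q hq
    obtain ⟨i, hi, rfl⟩ := Finset.mem_image.mp hq
    exact h i hi

lemma card_nonconst (q : ℕ) [NeZero q] :
    (Finset.univ.filter fun y : ZMod q → Bool => ∃ a b, y a ≠ y b).card = 2 ^ q - 2 := by
  classical
  have htot : Fintype.card (ZMod q → Bool) = 2 ^ q := by
    simp [Fintype.card_fun, ZMod.card]
  have hconst : (Finset.univ.filter fun y : ZMod q → Bool => ¬ ∃ a b, y a ≠ y b).card = 2 := by
    have heq : (Finset.univ.filter fun y : ZMod q → Bool => ¬ ∃ a b, y a ≠ y b)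
        = {fun _ => false, fun _ => true} := by
      ext y
      simp only [Finset.mem_filter, Finset.mem_univ, true_and, Finset.mem_insert,
        Finset.mem_singleton]
      push_neg
      constructor
      · intro h
        cases hy : y 0 with
        | false => left; funext j; rw [h j 0, hy]
        | true => right; funext j; rw [h j 0, hy]
      · rintro (rfl | rfl) <;> simp
    rw [heq, Finset.card_insert_of_notMem, Finset.card_singleton]
    simp only [Finset.mem_singleton]
    intro h
    have := congrFun h 0
    simp at this
  have hsub : (Finset.univ.filter fun y : ZMod q → Bool => ∃ a b, y a ≠ y b)
      = Finset.univ \ (Finset.univ.filter fun y : ZMod q → Bool => ¬ ∃ a b, y a ≠ y b) := by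
    ext y
    simp only [Finset.mem_filter, Finset.mem_univ, true_and, Finset.mem_sdiff, not_not]
  rw [hsub, Finset.card_sdiff_of_subset (Finset.filter_subset _ _), hconst, Finset.card_univ, htot]

/-- Let `p_1, …, p_k` be distinct primes and `f` the product of cyclic shifts on the blocks.
For every `S ⊆ {1,…,k}`, the number of orbits of `f` of cardinality `∏_{i∈S} p_i` is at
least `∏_{i∈S} (2^{p_i} - 2)/p_i`. -/
theorem prodShift_many_long_orbits {k : ℕ} (p : Fin k → ℕ) (hp : ∀ i, (p i).Prime)
    (hinj : Function.Injective p) (S : Finset (Fin k)) :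
    (∏ i ∈ S, (2 ^ p i - 2) / p i) ≤
      {s : Set ((i : Fin k) → ZMod (p i) → Bool) |
        (∃ x, s = prodOrbit p x) ∧ s.ncard = ∏ i ∈ S, p i}.ncard := by
  classical
  haveI : ∀ i, NeZero (p i) := fun i => ⟨(hp i).pos.ne'⟩
  set X := (i : Fin k) → ZMod (p i) → Bool with hX
  set M := ∏ i ∈ S, p i with hM
  have hM0 : 0 < M := Finset.prod_pos fun i _ => (hp i).pos
  -- the family of per-block Finsets
  set B : (i : Fin k) → Finset (ZMod (p i) → Bool) := fun i =>
    if i ∈ S then (Finset.univ.filter fun y => ∃ a b, y a ≠ y b)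
    else {fun _ => false} with hB
  set A : Finset X := Fintype.piFinset B with hA
  -- cardinality of A
  have hAcard : A.card = ∏ i ∈ S, (2 ^ p i - 2) := by
    rw [hA, Fintype.card_piFinset]
    have : ∀ i : Fin k, (B i).card = if i ∈ S then (2 ^ p i - 2) else 1 := by
      intro i
      rw [hB]
      by_cases hi : i ∈ S <;> simp [hi, card_nonconst]
    rw [Finset.prod_congr rfl fun i _ => this i]
    rw [Finset.prod_ite_mem, Finset.univ_inter]
  -- exact period for elements of A
  have hper : ∀ x ∈ A, ∀ n : ℕ, (prodShift p)^[n] x = x ↔ M ∣ n := by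
    intro x hx n
    rw [Fintype.mem_piFinset] at hx
    constructor
    · intro h
      refine prod_primes_dvd' p hp hinj S n fun i hi => ?_
      have hxi := hx i
      rw [hB] at hxi
      simp only [hi, if_pos] at hxi
      obtain ⟨a, b, hab⟩ := (Finset.mem_filter.mp hxi).2
      refine block_period (hp i) (x i) a b hab n fun j => ?_
      have := congrFun (congrFun ((prodShift_iterate p n x).symm.trans h) i) j
      exact this
    · intro h
      rw [prodShift_iterate]
      funext i j
      by_cases hi : i ∈ S
      · have : ((n : ℕ) : ZMod (p i)) = 0 := by
          rw [ZMod.natCast_eq_zero_iff]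
          exact dvd_trans (Finset.dvd_prod_of_mem p hi) h
        rw [this, sub_zero]
      · have hxi := hx i
        rw [hB] at hxi
        simp only [hi, if_neg, not_false_iff, Finset.mem_singleton] at hxi
        rw [hxi]
  -- orbit of x ∈ A as a Finset image
  have horb : ∀ x ∈ A, prodOrbit p x
      = ↑((Finset.range M).image fun n => (prodShift p)^[n] x) := by
    intro x hx
    ext y
    simp only [prodOrbit, Set.mem_setOf_eq, Finset.coe_image, Set.mem_image,
      Finset.mem_coe, Finset.mem_range]
    constructor
    · rintro ⟨n, rfl⟩
      refine ⟨n % M, Nat.mod_lt _ hM0, ?_⟩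
      conv_rhs => rw [show n = n % M + M * (n / M) from (Nat.mod_add_div n M).symm]
      rw [Function.iterate_add_apply]
      congr 1
      exact ((hper x hx _).mpr ⟨n / M, rfl⟩).symm
    · rintro ⟨n, _, rfl⟩
      exact ⟨n, rfl⟩
  -- orbit cardinality
  have horbcard : ∀ x ∈ A, (prodOrbit p x).ncard = M := by
    intro x hx
    rw [horb x hx, Set.ncard_coe_finset]
    rw [Finset.card_image_of_injOn, Finset.card_range]
    have key : ∀ a b : ℕ, a < M → b < M → a ≤ b →
        (prodShift p)^[a] x = (prodShift p)^[b] x → a = b := by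
      intro a b ha hb hle hab
      have hsplit : (prodShift p)^[b] x = (prodShift p)^[a] ((prodShift p)^[b - a] x) := by
        rw [← Function.iterate_add_apply]
        congr 1
        omega
      rw [hsplit] at hab
      have hfix : (prodShift p)^[b - a] x = x :=
        (Function.Injective.iterate (prodShift_injective p) a) hab.symm
      have hdvd := (hper x hx _).mp hfix
      have hz := Nat.eq_zero_of_dvd_of_lt hdvd (by omega)
      omega
    intro a ha b hb hab
    simp only [Finset.coe_range, Set.mem_Iio] at ha hb
    change (prodShift p)^[a] x = (prodShift p)^[b] x at hab
    rcases le_total a b with h | h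
    · exact key a b ha hb h hab
    · exact (key b a hb ha h hab.symm).symm
  -- counting
  set g : X → Set X := fun x => prodOrbit p x with hg
  have himsub : ↑(A.image g) ⊆ {s : Set X | (∃ x, s = prodOrbit p x) ∧ s.ncard = M} := by
    intro O hO
    obtain ⟨x, hx, rfl⟩ := Finset.mem_image.mp (Finset.mem_coe.mp hO)
    exact ⟨⟨x, rfl⟩, horbcard x hx⟩
  have hfiber : ∀ O ∈ A.image g, (A.filter fun x => g x = O).card ≤ M := by
    intro O hO
    obtain ⟨x0, hx0, rfl⟩ := Finset.mem_image.mp hO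
    have hsub2 : ↑(A.filter fun x => g x = g x0) ⊆ g x0 := by
      intro x hx
      simp only [Finset.coe_filter, Set.mem_setOf_eq] at hx
      rw [← hx.2]
      exact ⟨0, rfl⟩
    calc (A.filter fun x => g x = g x0).card
        = (↑(A.filter fun x => g x = g x0) : Set X).ncard := (Set.ncard_coe_finset _).symm
      _ ≤ (g x0).ncard := Set.ncard_le_ncard hsub2 (Set.toFinite _)
      _ = M := horbcard x0 hx0
  have hcount : A.card ≤ M * (A.image g).card :=
    Finset.card_le_mul_card_image A M hfiber
  have himcard : (A.image g).card
      ≤ {s : Set X | (∃ x, s = prodOrbit p x) ∧ s.ncard = M}.ncard := by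
    rw [← Set.ncard_coe_finset]
    exact Set.ncard_le_ncard himsub (Set.toFinite _)
  have hdiv : ∏ i ∈ S, (2 ^ p i - 2) = M * ∏ i ∈ S, (2 ^ p i - 2) / p i := by
    rw [hM, ← Finset.prod_mul_distrib]
    exact Finset.prod_congr rfl fun i _ => (Nat.mul_div_cancel' (fermat_little (p i) (hp i))).symm
  have hfinal : M * (∏ i ∈ S, (2 ^ p i - 2) / p i)
      ≤ M * {s : Set X | (∃ x, s = prodOrbit p x) ∧ s.ncard = M}.ncard := by
    rw [← hdiv, ← hAcard]
    exact le_trans hcount (Nat.mul_le_mul_left M himcard)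
  exact Nat.le_of_mul_le_mul_left hfinal hM0
end

section
/- For every M > 0 there exist N ≥ M, a linear thresholding system (J, θ) on N genes with all thresholds positive, and a point x ∈ {0,1}^N that is periodic for f_{(J,θ)} with minimal period greater than e^{√N}. -/
/-! ### Number-theoretic preliminaries: a lower bound for `lcm (1, ..., 2n)` -/

/-- lcm of `1, ..., m`. -/
def rlcm (m : ℕ) : ℕ := (Finset.Icc 1 m).lcm id

lemma rlcm_pos (m : ℕ) : 0 < rlcm m := by
  rw [Nat.pos_iff_ne_zero, Ne, rlcm, Finset.lcm_eq_zero_iff]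
  rintro ⟨b, hb, rfl⟩
  simp only [Finset.coe_Icc, Set.mem_Icc, Finset.mem_Icc] at hb
  omega

lemma dvd_rlcm {a m : ℕ} (h1 : 1 ≤ a) (h2 : a ≤ m) : a ∣ rlcm m :=
  Finset.dvd_lcm (by simp [Finset.mem_Icc, h1, h2])

lemma centralBinom_dvd_rlcm (n : ℕ) (hn : 0 < n) : Nat.centralBinom n ∣ rlcm (2 * n) := by
  rw [← Nat.factorization_le_iff_dvd (Nat.centralBinom_ne_zero n) (rlcm_pos _).ne']
  intro p
  by_cases hp : p.Prime
  · have h1 : (Nat.centralBinom n).factorization p ≤ Nat.log p (2 * n) :=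
      Nat.factorization_choose_le_log
    refine h1.trans ?_
    rcases Nat.eq_zero_or_pos (Nat.log p (2 * n)) with h | h
    · simp [h]
    · have hple : p ^ Nat.log p (2 * n) ∣ rlcm (2 * n) :=
        dvd_rlcm (Nat.one_le_pow _ _ hp.pos) (Nat.pow_log_le_self p (by omega))
      exact (hp.pow_dvd_iff_le_factorization (rlcm_pos _).ne').mp hple
  · simp [Nat.factorization_eq_zero_of_not_prime _ hp]

lemma four_pow_le_rlcm (n : ℕ) (hn : 0 < n) : 4 ^ n ≤ 2 * n * rlcm (2 * n) :=
  (Nat.four_pow_le_two_mul_self_mul_centralBinom n hn).trans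
    (Nat.mul_le_mul_left _ (Nat.le_of_dvd (rlcm_pos _) (centralBinom_dvd_rlcm n hn)))

lemma sum_range_two_mul_add_one (n : ℕ) : ∑ i ∈ Finset.range n, (2 * i + 1) = n ^ 2 := by
  induction n with
  | zero => simp
  | succ n ih => rw [Finset.sum_range_succ, ih]; ring

/-- `lcm (1, ..., 2n)` divides the lcm of the block lengths
`2 ^ log₂(2n), 1, 3, 5, ..., 2n - 1`. -/
lemma rlcm_dvd_blocks (n : ℕ) (c : Fin (n + 1) → ℕ)
    (h0 : c 0 + 1 = 2 ^ Nat.log 2 (2 * n))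
    (hs : ∀ j : Fin n, c j.succ + 1 = 2 * j.val + 1) :
    rlcm (2 * n) ∣ Finset.univ.lcm (fun i => c i + 1) := by
  apply Finset.lcm_dvd
  intro b hb
  simp only [Finset.mem_Icc] at hb
  have hb0 : b ≠ 0 := by omega
  set v := b.factorization 2 with hv
  have h2v_dvd : 2 ^ v ∣ b := Nat.ordProj_dvd b 2
  have h2v_le : 2 ^ v ≤ 2 * n := le_trans (Nat.le_of_dvd (by omega) h2v_dvd) hb.2
  have hv_le : v ≤ Nat.log 2 (2 * n) := Nat.le_log_of_pow_le one_lt_two h2v_le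
  have h1 : (2:ℕ) ^ v ∣ Finset.univ.lcm (fun i => c i + 1) := by
    refine dvd_trans ?_ (Finset.dvd_lcm (Finset.mem_univ (0 : Fin (n + 1))))
    rw [h0]
    exact pow_dvd_pow 2 hv_le
  set u := b / 2 ^ v with hu
  have hu_odd : ¬ 2 ∣ u := Nat.not_dvd_ordCompl Nat.prime_two hb0
  have hu_pos : 0 < u := Nat.ordCompl_pos 2 hb0
  have hu_le : u ≤ b := Nat.ordCompl_le b 2
  have hu_form : u = 2 * (u / 2) + 1 := by omega
  have hj : u / 2 < n := by omega
  have h2 : u ∣ Finset.univ.lcm (fun i => c i + 1) := by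
    have h2' : c (Fin.succ ⟨u / 2, hj⟩) + 1 ∣ Finset.univ.lcm (fun i => c i + 1) :=
      Finset.dvd_lcm (f := fun i => c i + 1)
        (Finset.mem_univ (Fin.succ (⟨u / 2, hj⟩ : Fin n)))
    rwa [hs ⟨u / 2, hj⟩, ← hu_form] at h2'
  have hcop : Nat.Coprime (2 ^ v) u :=
    Nat.Coprime.pow_left _ ((Nat.prime_two.coprime_iff_not_dvd).mpr hu_odd)
  have hbu : 2 ^ v * u = b := Nat.ordProj_mul_ordCompl_eq_self b 2
  calc (id b : ℕ) = 2 ^ v * u := hbu.symm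
  _ ∣ _ := hcop.mul_dvd_of_dvd_of_dvd h1 h2

/-! ### Real inequality -/

lemma key_real_ineq (n N Λ : ℕ) (hn : 400 ≤ n) (hN : N ≤ (n + 1) ^ 2)
    (h4 : 4 ^ n ≤ 2 * n * Λ) :
    Real.exp (Real.sqrt N) < (Λ : ℝ) := by
  have hn0 : (0:ℝ) < (n:ℝ) := by
    have : (400:ℝ) ≤ (n:ℝ) := by exact_mod_cast hn
    linarith
  set s : ℝ := Real.sqrt n with hs_def
  have hs2 : s ^ 2 = n := Real.sq_sqrt hn0.le
  have hs20 : 20 ≤ s := by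
    have h1 : Real.sqrt 400 ≤ s := Real.sqrt_le_sqrt (by exact_mod_cast hn)
    have h2 : Real.sqrt 400 = 20 := by
      rw [show (400:ℝ) = 20 ^ 2 by norm_num, Real.sqrt_sq (by norm_num)]
    linarith
  have hs0 : 0 < s := by linarith
  have hsqN : Real.sqrt N ≤ (n:ℝ) + 1 := by
    have h1 : Real.sqrt N ≤ Real.sqrt (((n:ℝ) + 1) ^ 2) := by
      apply Real.sqrt_le_sqrt
      have : (N:ℝ) ≤ (((n:ℕ) + 1 : ℕ) : ℝ) ^ 2 := by exact_mod_cast hN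
      push_cast at this ⊢
      linarith
    rwa [Real.sqrt_sq (by positivity)] at h1
  have hlog2n : Real.log (2 * n) ≤ 3 * s := by
    have h2n0 : (0:ℝ) < 2 * n := by linarith
    have h1 : Real.log (2 * n) = 2 * Real.log (Real.sqrt (2 * n)) := by
      rw [Real.log_sqrt h2n0.le]; ring
    have h2 : Real.log (Real.sqrt (2 * n)) ≤ Real.sqrt (2 * n) - 1 :=
      Real.log_le_sub_one_of_pos (Real.sqrt_pos.mpr h2n0)
    have h3 : Real.sqrt (2 * (n:ℝ)) = Real.sqrt 2 * s := Real.sqrt_mul (by norm_num) _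
    have h4 : Real.sqrt 2 ≤ 1.5 := by
      rw [show (1.5:ℝ) = Real.sqrt (1.5 ^ 2) from (Real.sqrt_sq (by norm_num)).symm]
      exact Real.sqrt_le_sqrt (by norm_num)
    nlinarith [hs0]
  have hlog4 : (1.3862943606:ℝ) < Real.log 4 := by
    have h24 : Real.log 4 = 2 * Real.log 2 := by
      rw [show (4:ℝ) = 2 ^ 2 by norm_num, Real.log_pow]; push_cast; ring
    have h2 := Real.log_two_gt_d9
    rw [h24]; linarith
  have hΛ4 : (4:ℝ) ^ n / (2 * n) ≤ (Λ:ℝ) := by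
    rw [div_le_iff₀ (by linarith)]
    calc (4:ℝ) ^ n ≤ ((2 * n * Λ : ℕ) : ℝ) := by exact_mod_cast h4
    _ = (Λ:ℝ) * (2 * n) := by push_cast; ring
  have hexp : Real.exp (Real.sqrt N) < (4:ℝ) ^ n / (2 * n) := by
    have heq : (4:ℝ) ^ n / (2 * n) = Real.exp ((n:ℝ) * Real.log 4 - Real.log (2 * n)) := by
      rw [Real.exp_sub, Real.exp_nat_mul, Real.exp_log (by norm_num : (0:ℝ) < 4),
        Real.exp_log (by linarith)]
    rw [heq]
    apply Real.exp_lt_exp.mpr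
    nlinarith [hsqN, hlog2n, hlog4, hs20, mul_le_mul_of_nonneg_left hlog4.le (sq_nonneg s)]
  linarith

/-! ### Dynamics of block rotations -/

section Dyn

open Fin.NatCast

variable {k : ℕ} (c : Fin k → ℕ)

/-- The permutation rotating each block `Fin (c i + 1)` by one. -/
def rotPerm : Equiv.Perm (Σ i : Fin k, Fin (c i + 1)) :=
  Equiv.sigmaCongrRight fun _ => Equiv.addRight 1

lemma rotPerm_pow (m : ℕ) (p : Σ i : Fin k, Fin (c i + 1)) :
    ((rotPerm c) ^ m) p = ⟨p.1, p.2 + (m : Fin (c p.1 + 1))⟩ := by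
  induction m with
  | zero => simp
  | succ m ih =>
    rw [pow_succ', Equiv.Perm.mul_apply, ih]
    show (⟨p.1, (p.2 + (m : Fin (c p.1 + 1))) + 1⟩ : Σ i : Fin k, Fin (c i + 1)) = _
    rw [Sigma.mk.inj_iff]
    refine ⟨rfl, heq_of_eq ?_⟩
    rw [Nat.cast_add, Nat.cast_one, add_assoc]

/-- The state marking the origin of each block. -/
def mark : (Σ i : Fin k, Fin (c i + 1)) → Bool := fun p => decide (p.2 = 0)

lemma comp_iterate' {β : Type*} (σ : Equiv.Perm β) (m : ℕ) (y : β → Bool) :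
    (fun z : β → Bool => z ∘ ⇑σ⁻¹)^[m] y = y ∘ ⇑(σ ^ m)⁻¹ := by
  induction m with
  | zero => simp [Function.comp]
  | succ m ih =>
    rw [Function.iterate_succ_apply', ih]
    funext z
    simp only [Function.comp_apply, pow_succ', mul_inv_rev, Equiv.Perm.mul_apply]

lemma rotPerm_pow_eq_one_iff (m : ℕ) :
    (rotPerm c) ^ m = 1 ↔ ∀ i : Fin k, (c i + 1) ∣ m := by
  constructor
  · intro h i
    have := congrArg (fun σ : Equiv.Perm _ => σ ⟨i, 0⟩) h
    simp only [rotPerm_pow, Equiv.Perm.one_apply] at this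
    rw [Sigma.mk.inj_iff] at this
    have h2 : (0 : Fin (c i + 1)) + (m : Fin (c i + 1)) = 0 := eq_of_heq this.2
    rw [zero_add, Fin.natCast_eq_zero] at h2
    exact h2
  · intro h
    refine Equiv.ext fun p => ?_
    rw [rotPerm_pow]
    have : (m : Fin (c p.1 + 1)) = 0 := Fin.natCast_eq_zero.mpr (h p.1)
    rw [this, add_zero, Sigma.eta, Equiv.Perm.one_apply]

lemma mark_periodic_iff (m : ℕ) :
    Function.IsPeriodicPt (fun z => z ∘ ⇑(rotPerm c)⁻¹) m (mark c) ↔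
      ∀ i : Fin k, (c i + 1) ∣ m := by
  unfold Function.IsPeriodicPt Function.IsFixedPt
  rw [comp_iterate']
  constructor
  · intro h i
    have := congrFun h (((rotPerm c) ^ m) ⟨i, 0⟩)
    simp only [Function.comp_apply, Equiv.Perm.inv_def, Equiv.symm_apply_apply] at this
    rw [rotPerm_pow] at this
    have h2 : (m : Fin (c i + 1)) = 0 := by
      simpa [mark] using this.symm
    rwa [Fin.natCast_eq_zero] at h2
  · intro h
    have h1 : (rotPerm c) ^ m = 1 := (rotPerm_pow_eq_one_iff c m).mpr h
    rw [h1, inv_one]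
    rfl

end Dyn

/-! ### Transport along an equivalence -/

lemma permCongrPow {α β : Type*} (e : α ≃ β) (σ : Equiv.Perm α) (m : ℕ) :
    (e.permCongr σ) ^ m = e.permCongr (σ ^ m) := by
  induction m with
  | zero =>
    refine Equiv.ext fun b => ?_
    simp [Equiv.permCongr_apply]
  | succ m ih =>
    rw [pow_succ, pow_succ, ih]
    refine Equiv.ext fun b => ?_
    simp [Equiv.permCongr_apply, Equiv.Perm.mul_apply]

lemma permCongrInv {α β : Type*} (e : α ≃ β) (σ : Equiv.Perm α) :
    (e.permCongr σ)⁻¹ = e.permCongr σ⁻¹ := by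
  refine Equiv.ext fun b => ?_
  rw [← Equiv.Perm.eq_inv_iff_eq]
  simp [Equiv.permCongr_apply]

lemma transfer_periodic {α β : Type*} (e : α ≃ β) (σ : Equiv.Perm α) (x : α → Bool) (m : ℕ) :
    Function.IsPeriodicPt (fun z : β → Bool => z ∘ ⇑(e.permCongr σ)⁻¹) m (x ∘ ⇑e.symm) ↔
      Function.IsPeriodicPt (fun z : α → Bool => z ∘ ⇑σ⁻¹) m x := by
  unfold Function.IsPeriodicPt Function.IsFixedPt
  rw [comp_iterate', comp_iterate', permCongrPow, permCongrInv]
  constructor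
  · intro h
    funext p
    have := congrFun h (e p)
    simpa using this
  · intro h
    funext b
    have := congrFun h (e.symm b)
    simpa using this

/-! ### Permutation matrices as linear thresholding systems -/

lemma ltsMap_perm {N : ℕ} (σ : Equiv.Perm (Fin N)) (y : Fin N → Bool) :
    ltsMap (fun i j => if σ j = i then 1 else 0) (fun _ => 1/2) y = y ∘ ⇑σ⁻¹ := by
  funext i
  have hv : Matrix.mulVec (fun i j => if σ j = i then (1:ℝ) else 0)
      (fun j => if y j then (1:ℝ) else 0) i = if y (σ⁻¹ i) then (1:ℝ) else 0 := by
    simp only [Matrix.mulVec, dotProduct]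
    rw [Finset.sum_eq_single (σ⁻¹ i)]
    · simp
    · intro b _ hb
      rw [if_neg, zero_mul]
      intro hc
      exact hb (by rw [← hc]; simp)
    · simp
  unfold ltsMap
  rw [hv]
  cases h : y (σ⁻¹ i) <;> simp [h] <;> norm_num <;> exact h

/-! ### Main theorem -/

/-- For every `M > 0` there exist `N ≥ M`, a linear thresholding system on `N` genes with
positive thresholds, and a periodic point whose minimal period exceeds `e^√N`. -/
theorem exists_long_cycle (M : ℕ) (hM : 0 < M) :
    ∃ N : ℕ, M ≤ N ∧
      ∃ (J : Matrix (Fin N) (Fin N) ℝ) (θ : Fin N → ℝ),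
        (∀ i, 0 < θ i) ∧
        ∃ x : Fin N → Bool,
          (∃ n, 0 < n ∧ (ltsMap J θ)^[n] x = x) ∧
          Real.exp (Real.sqrt N) < (Function.minimalPeriod (ltsMap J θ) x : ℝ) := by
  set n := max M 400 with hn_def
  have hn400 : 400 ≤ n := le_max_right _ _
  have hnM : M ≤ n := le_max_left _ _
  have hn0 : 0 < n := by omega
  set k2 := Nat.log 2 (2 * n) with hk2_def
  have h2k_le : 2 ^ k2 ≤ 2 * n := Nat.pow_log_le_self 2 (by omega)
  have h2k_pos : 1 ≤ 2 ^ k2 := Nat.one_le_two_pow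
  set c : Fin (n + 1) → ℕ := Fin.cons (2 ^ k2 - 1) (fun i : Fin n => 2 * i.val) with hc_def
  have hc0 : c 0 + 1 = 2 ^ k2 := by
    rw [hc_def, Fin.cons_zero]; omega
  have hcs : ∀ j : Fin n, c j.succ + 1 = 2 * j.val + 1 := fun j => by
    rw [hc_def, Fin.cons_succ]
  set N := Fintype.card ((i : Fin (n + 1)) × Fin (c i + 1)) with hN_def
  let e : ((i : Fin (n + 1)) × Fin (c i + 1)) ≃ Fin N := Fintype.equivFin _
  set Λ := Finset.univ.lcm (fun i : Fin (n + 1) => c i + 1) with hΛ_def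
  have hΛpos : 0 < Λ := by
    rw [Nat.pos_iff_ne_zero, Ne, hΛ_def, Finset.lcm_eq_zero_iff]
    rintro ⟨i, -, h⟩
    exact Nat.succ_ne_zero (c i) h
  have hN_eq : N = 2 ^ k2 + n ^ 2 := by
    rw [hN_def, Fintype.card_sigma]
    simp only [Fintype.card_fin]
    rw [Fin.sum_univ_succ, hc0]
    congr 1
    calc ∑ i : Fin n, (c i.succ + 1) = ∑ i : Fin n, (2 * i.val + 1) :=
          Finset.sum_congr rfl fun i _ => hcs i
    _ = ∑ i ∈ Finset.range n, (2 * i + 1) := Fin.sum_univ_eq_sum_range (fun j => 2 * j + 1) n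
    _ = n ^ 2 := sum_range_two_mul_add_one n
  refine ⟨N, ?_, ?_⟩
  · have h1 : n ≤ n ^ 2 := Nat.le_self_pow two_ne_zero n
    omega
  set σ := e.permCongr (rotPerm c) with hσ
  refine ⟨fun i j => if σ j = i then 1 else 0, fun _ => 1/2, fun i => by norm_num, ?_⟩
  have hf : ltsMap (fun i j => if σ j = i then 1 else 0) (fun _ => 1/2) =
      fun y : Fin N → Bool => y ∘ ⇑σ⁻¹ := funext (ltsMap_perm σ)
  set x : Fin N → Bool := mark c ∘ ⇑e.symm with hx_def
  have hper_iff : ∀ m, Function.IsPeriodicPt (fun z : Fin N → Bool => z ∘ ⇑σ⁻¹) m x ↔ Λ ∣ m := by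
    intro m
    rw [hx_def, hσ, transfer_periodic, mark_periodic_iff]
    constructor
    · intro h
      exact Finset.lcm_dvd fun i _ => h i
    · intro h i
      exact (Finset.dvd_lcm (Finset.mem_univ i)).trans h
  have hperΛ : Function.IsPeriodicPt (fun z : Fin N → Bool => z ∘ ⇑σ⁻¹) Λ x :=
    (hper_iff Λ).mpr dvd_rfl
  refine ⟨x, ⟨Λ, hΛpos, ?_⟩, ?_⟩
  · rw [hf]
    exact hperΛ
  · rw [hf]
    have hmp_pos : 0 < Function.minimalPeriod (fun z : Fin N → Bool => z ∘ ⇑σ⁻¹) x :=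
      hperΛ.minimalPeriod_pos hΛpos
    have hdvd : Λ ∣ Function.minimalPeriod (fun z : Fin N → Bool => z ∘ ⇑σ⁻¹) x :=
      (hper_iff _).mp (Function.isPeriodicPt_minimalPeriod _ _)
    have hle : Λ ≤ Function.minimalPeriod (fun z : Fin N → Bool => z ∘ ⇑σ⁻¹) x :=
      Nat.le_of_dvd hmp_pos hdvd
    have hglue : rlcm (2 * n) ∣ Λ := by
      rw [hΛ_def]
      exact rlcm_dvd_blocks n c hc0 hcs
    have h4 : 4 ^ n ≤ 2 * n * Λ :=
      (four_pow_le_rlcm n hn0).trans (Nat.mul_le_mul_left _ (Nat.le_of_dvd hΛpos hglue))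
    have hNle : N ≤ (n + 1) ^ 2 := by
      have h2 : (n + 1) ^ 2 = n ^ 2 + 2 * n + 1 := by ring
      omega
    have hkey := key_real_ineq n N Λ hn400 hNle h4
    calc Real.exp (Real.sqrt N) < (Λ : ℝ) := hkey
    _ ≤ _ := by exact_mod_cast hle
end
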